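/- Fix an integer d ≥ 1 and reals m₁, m₂ > 0, n_{∞,1}, n_{∞,2} > 0, and parameters α, δ, γ ∈ ℝ. Set f₁^∞(v) = n_{∞,1}(m₁/(2π))^{d/2} exp(−m₁|v|²/2). For (σ₁, σ₂, μ₁, μ₂, τ₁, τ₂) ∈ ℝ × ℝ × ℝ^d × ℝ^d × ℝ × ℝ near 0, define n_i = n_{∞,i} + σ_i, P_i = n_{∞,i} + (1/d)(τ_i − m_i|μ_i|²/n_i) for i = 1, 2, the mixture momentum μ₁₂ = δ μ₁ + (1−δ)(n₁/n₂) μ₂, the mixture pressure P₁₂ = α P₁ + (1−α)(n₁/n₂) P₂ + γ |μ₁ − (n₁/n₂)μ₂|²/n₁, and M₁₂(v) = n₁^{1+d/2}/(2π P₁₂/m₁)^{d/2} · exp(− m₁ |v n₁ − μ₁₂|² / (2 P₁₂ n₁)). Then M₁₂ is differentiable at the origin for each fixed v, with partial derivatives there: ∂_{σ₁} M₁₂ = f₁^∞(v) (1/n_{∞,1}) (1 + (α/2)(d − m₁|v|²)), ∂_{σ₂} M₁₂ = f₁^∞(v) (1/(2 n_{∞,2})) (1−α)(d − m₁|v|²),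 ∇_{μ₁} M₁₂ = f₁^∞(v) (δ m₁/n_{∞,1}) v, ∇_{μ₂} M₁₂ = f₁^∞(v) ((1−δ) m₁/n_{∞,2}) v, ∂_{τ₁} M₁₂ = f₁^∞(v) (α/(2 n_{∞,1})) ((m₁|v|²)/d − 1), and ∂_{τ₂} M₁₂ = f₁^∞(v) ((1−α)/(2 n_{∞,2})) ((m₁|v|²)/d − 1). -/

import Mathlib

open Real

lemma myHasFDerivAt_div {X : Type*} [NormedAddCommGroup X] [NormedSpace ℝ X]
    {f g : X → ℝ} {f' g' : X →L[ℝ] ℝ} {x : X}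
    (hf : HasFDerivAt f f' x) (hg : HasFDerivAt g g' x) (h : g x ≠ 0) :
    HasFDerivAt (fun p => f p / g p) ((g x)⁻¹ • f' - (f x / g x ^ 2) • g') x := by
  have hinv := (hasFDerivAt_inv h).comp x hg
  have := hf.mul hinv
  convert this using 1
  · ext p
    simp [div_eq_mul_inv, Function.comp]
  · rfl
  · funext p
    simp [div_eq_mul_inv, Function.comp]
  · ext p
    simp [div_eq_mul_inv, Function.comp]
    ring

noncomputable def equilMaxwellian1 (d : ℕ) (m₁ nInf1 : ℝ) (v : EuclideanSpace ℝ (Fin d)) : ℝ :=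
  nInf1 * (m₁ / (2 * Real.pi)) ^ ((d : ℝ) / 2) * Real.exp (-m₁ * ‖v‖ ^ 2 / 2)

noncomputable def interMaxwellian12 (d : ℕ) (m₁ m₂ nInf1 nInf2 α δ γ : ℝ)
    (p : ℝ × ℝ × EuclideanSpace ℝ (Fin d) × EuclideanSpace ℝ (Fin d) × ℝ × ℝ)
    (v : EuclideanSpace ℝ (Fin d)) : ℝ :=
  let σ₁ := p.1
  let σ₂ := p.2.1
  let μ₁ := p.2.2.1
  let μ₂ := p.2.2.2.1
  let τ₁ := p.2.2.2.2.1
  let τ₂ := p.2.2.2.2.2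
  let n₁ := nInf1 + σ₁
  let n₂ := nInf2 + σ₂
  let P₁ := nInf1 + (1 / (d : ℝ)) * (τ₁ - m₁ * ‖μ₁‖ ^ 2 / n₁)
  let P₂ := nInf2 + (1 / (d : ℝ)) * (τ₂ - m₂ * ‖μ₂‖ ^ 2 / n₂)
  let μ₁₂ := δ • μ₁ + ((1 - δ) * (n₁ / n₂)) • μ₂
  let P₁₂ := α * P₁ + (1 - α) * (n₁ / n₂) * P₂ + γ * ‖μ₁ - (n₁ / n₂) • μ₂‖ ^ 2 / n₁
  n₁ ^ ((1 : ℝ) + (d : ℝ) / 2) / (2 * Real.pi * P₁₂ / m₁) ^ ((d : ℝ) / 2) *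
    Real.exp (-(m₁ * ‖n₁ • v - μ₁₂‖ ^ 2) / (2 * P₁₂ * n₁))

set_option maxHeartbeats 2000000 in
theorem interMaxwellian12_hasFDerivAt_zero (d : ℕ) (hd : 1 ≤ d) (m₁ m₂ nInf1 nInf2 : ℝ)
    (hm₁ : 0 < m₁) (hm₂ : 0 < m₂) (hn₁ : 0 < nInf1) (hn₂ : 0 < nInf2) (α δ γ : ℝ)
    (v : EuclideanSpace ℝ (Fin d)) :
    ∃ L : (ℝ × ℝ × EuclideanSpace ℝ (Fin d) × EuclideanSpace ℝ (Fin d) × ℝ × ℝ) →L[ℝ] ℝ,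
      HasFDerivAt (fun p => interMaxwellian12 d m₁ m₂ nInf1 nInf2 α δ γ p v) L
        (0 : ℝ × ℝ × EuclideanSpace ℝ (Fin d) × EuclideanSpace ℝ (Fin d) × ℝ × ℝ) ∧
      ∀ (σ₁ σ₂ : ℝ) (μ₁ μ₂ : EuclideanSpace ℝ (Fin d)) (τ₁ τ₂ : ℝ),
        L (σ₁, σ₂, μ₁, μ₂, τ₁, τ₂) =
          equilMaxwellian1 d m₁ nInf1 v * (1 / nInf1) * (1 + (α / 2) * (d - m₁ * ‖v‖ ^ 2)) * σ₁
          + equilMaxwellian1 d m₁ nInf1 v * (1 / (2 * nInf2)) * (1 - α) * (d - m₁ * ‖v‖ ^ 2) * σ₂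
          + equilMaxwellian1 d m₁ nInf1 v * (δ * m₁ / nInf1) * (inner ℝ v μ₁ : ℝ)
          + equilMaxwellian1 d m₁ nInf1 v * ((1 - δ) * m₁ / nInf2) * (inner ℝ v μ₂ : ℝ)
          + equilMaxwellian1 d m₁ nInf1 v * (α / (2 * nInf1)) * (m₁ * ‖v‖ ^ 2 / d - 1) * τ₁
          + equilMaxwellian1 d m₁ nInf1 v * ((1 - α) / (2 * nInf2)) * (m₁ * ‖v‖ ^ 2 / d - 1) * τ₂ := by
  classical
  have hσ₁ : HasFDerivAt (fun p : ℝ × ℝ × EuclideanSpace ℝ (Fin d) × EuclideanSpace ℝ (Fin d) × ℝ × ℝ => p.1)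
      (ContinuousLinearMap.fst ℝ ℝ _) 0 := hasFDerivAt_fst
  have hσ₂ := (hasFDerivAt_snd (𝕜 := ℝ) (E := ℝ)
    (p := (0 : ℝ × ℝ × EuclideanSpace ℝ (Fin d) × EuclideanSpace ℝ (Fin d) × ℝ × ℝ))).fst
  have hμ₁ := (hasFDerivAt_snd (𝕜 := ℝ) (E := ℝ)
    (p := (0 : ℝ × ℝ × EuclideanSpace ℝ (Fin d) × EuclideanSpace ℝ (Fin d) × ℝ × ℝ))).snd.fst
  have hμ₂ := (hasFDerivAt_snd (𝕜 := ℝ) (E := ℝ)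
    (p := (0 : ℝ × ℝ × EuclideanSpace ℝ (Fin d) × EuclideanSpace ℝ (Fin d) × ℝ × ℝ))).snd.snd.fst
  have hτ₁ := (hasFDerivAt_snd (𝕜 := ℝ) (E := ℝ)
    (p := (0 : ℝ × ℝ × EuclideanSpace ℝ (Fin d) × EuclideanSpace ℝ (Fin d) × ℝ × ℝ))).snd.snd.snd.fst
  have hτ₂ := (hasFDerivAt_snd (𝕜 := ℝ) (E := ℝ)
    (p := (0 : ℝ × ℝ × EuclideanSpace ℝ (Fin d) × EuclideanSpace ℝ (Fin d) × ℝ × ℝ))).snd.snd.snd.snd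
  have hn1 := hσ₁.const_add nInf1
  have hn2 := hσ₂.const_add nInf2
  have hn10 : (fun p : ℝ × ℝ × EuclideanSpace ℝ (Fin d) × EuclideanSpace ℝ (Fin d) × ℝ × ℝ =>
      nInf1 + p.1) 0 ≠ 0 := by simp [hn₁.ne']
  have hn20 : (fun p : ℝ × ℝ × EuclideanSpace ℝ (Fin d) × EuclideanSpace ℝ (Fin d) × ℝ × ℝ =>
      nInf2 + p.2.1) 0 ≠ 0 := by simp [hn₂.ne']
  have hP1 := ((hτ₁.sub (myHasFDerivAt_div (hμ₁.norm_sq.const_mul m₁) hn1 hn10)).const_mul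
    (1 / (d : ℝ))).const_add nInf1
  have hP2 := ((hτ₂.sub (myHasFDerivAt_div (hμ₂.norm_sq.const_mul m₂) hn2 hn20)).const_mul
    (1 / (d : ℝ))).const_add nInf2
  have hratio := myHasFDerivAt_div hn1 hn2 hn20
  have hμ12 := (hμ₁.const_smul δ).add ((hratio.const_mul (1 - δ)).smul hμ₂)
  have hγterm := myHasFDerivAt_div ((hμ₁.sub (hratio.smul hμ₂)).norm_sq.const_mul γ) hn1 hn10
  have hP12 := ((hP1.const_mul α).add ((hratio.const_mul (1 - α)).mul hP2)).add hγterm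
  have hG := HasFDerivAt.prodMk hn1 (HasFDerivAt.prodMk hP12 hμ12)
  -- outer map on ℝ × ℝ × E at y0 = (nInf1, nInf1, 0)
  have hyn : HasFDerivAt (fun q : ℝ × ℝ × EuclideanSpace ℝ (Fin d) => q.1)
      (ContinuousLinearMap.fst ℝ ℝ _) ((nInf1, nInf1, 0) : ℝ × ℝ × EuclideanSpace ℝ (Fin d)) :=
    hasFDerivAt_fst
  have hyP := (hasFDerivAt_snd (𝕜 := ℝ) (E := ℝ)
    (p := ((nInf1, nInf1, 0) : ℝ × ℝ × EuclideanSpace ℝ (Fin d)))).fst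
  have hyμ := (hasFDerivAt_snd (𝕜 := ℝ) (E := ℝ)
    (p := ((nInf1, nInf1, 0) : ℝ × ℝ × EuclideanSpace ℝ (Fin d)))).snd
  have hnum := hyn.rpow_const (p := (1 : ℝ) + (d : ℝ) / 2) (Or.inl hn₁.ne')
  have hdenom := myHasFDerivAt_div (hyP.const_mul (2 * Real.pi))
    (hasFDerivAt_const m₁ ((nInf1, nInf1, 0) : ℝ × ℝ × EuclideanSpace ℝ (Fin d))) hm₁.ne'
  have h2πn : (2 * Real.pi * nInf1 / m₁ : ℝ) ≠ 0 := by positivity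
  have hdpow := hdenom.rpow_const (p := (d : ℝ) / 2) (Or.inl h2πn)
  have hApos : ((2 * Real.pi * nInf1 / m₁ : ℝ)) ^ ((d : ℝ) / 2) ≠ 0 := by positivity
  have hA := myHasFDerivAt_div hnum hdpow hApos
  have h2nn : (2 * nInf1 * nInf1 : ℝ) ≠ 0 := by positivity
  have hB := myHasFDerivAt_div
    ((((hyn.smul (hasFDerivAt_const v _)).sub hyμ).norm_sq.const_mul m₁).neg)
    ((hyP.const_mul 2).mul hyn) h2nn
  have hΦ := hA.mul hB.exp
  have hΦ2 : ∀ y : ℝ × ℝ × EuclideanSpace ℝ (Fin d),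
      y = ((nInf1, nInf1, 0) : ℝ × ℝ × EuclideanSpace ℝ (Fin d)) → HasFDerivAt _ _ y :=
    fun y hy => hy ▸ hΦ
  have hcomp := (hΦ2 _ (by
    simp only [Prod.mk.injEq]
    norm_num
    field_simp
    ring)).comp
    (0 : ℝ × ℝ × EuclideanSpace ℝ (Fin d) × EuclideanSpace ℝ (Fin d) × ℝ × ℝ) hG
  refine ⟨_, hcomp, ?_⟩
  intro σ₁ σ₂ μ₁ μ₂ τ₁ τ₂
  simp only [ContinuousLinearMap.comp_apply, ContinuousLinearMap.add_apply,
    ContinuousLinearMap.sub_apply, ContinuousLinearMap.smul_apply,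
    ContinuousLinearMap.smulRight_apply, ContinuousLinearMap.prod_apply,
    ContinuousLinearMap.coe_fst', ContinuousLinearMap.coe_snd',
    ContinuousLinearMap.one_apply, ContinuousLinearMap.neg_apply, innerSL_apply_apply,
    Prod.fst_zero, Prod.snd_zero, norm_zero, inner_zero_left, inner_zero_right,
    add_zero, zero_add, mul_zero, zero_mul, smul_zero, zero_div, sub_zero, zero_sub,
    smul_eq_mul, ne_eq, zero_pow, OfNat.ofNat_ne_zero, not_false_eq_true,
    inner_sub_right, inner_smul_right, real_inner_self_eq_norm_sq,
    Pi.add_apply, Pi.mul_apply, Pi.sub_apply, Pi.smul_apply, Pi.neg_apply, Pi.smul_apply']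
  have hd0 : (d : ℝ) ≠ 0 := by positivity
  have hmix : α * nInf1 + (1 - α) * (nInf1 / nInf2) * nInf2 = nInf1 := by field_simp; ring
  have hnv : ‖nInf1 • v‖ ^ 2 = nInf1 ^ 2 * ‖v‖ ^ 2 := by
    rw [norm_smul]; simp [abs_of_pos hn₁, mul_pow]
  have hexp2 : -(m₁ * (nInf1 ^ 2 * ‖v‖ ^ 2)) / (2 * nInf1 * nInf1) = -m₁ * ‖v‖ ^ 2 / 2 := by
    field_simp
  have hp1 : nInf1 ^ ((1 : ℝ) + (d : ℝ) / 2) = nInf1 * nInf1 ^ ((d : ℝ) / 2) := by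
    rw [Real.rpow_add hn₁, Real.rpow_one]
  have hp2 : ((1 : ℝ) + (d : ℝ) / 2 - 1) = (d : ℝ) / 2 := by ring
  have hp3 : (2 * Real.pi * nInf1 / m₁) ^ ((d : ℝ) / 2 - 1)
      = (2 * Real.pi * nInf1 / m₁) ^ ((d : ℝ) / 2) / (2 * Real.pi * nInf1 / m₁) := by
    rw [Real.rpow_sub (by positivity), Real.rpow_one]
  have hKC : nInf1 ^ ((d : ℝ) / 2)
      = (m₁ / (2 * Real.pi)) ^ ((d : ℝ) / 2) * (2 * Real.pi * nInf1 / m₁) ^ ((d : ℝ) / 2) := by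
    rw [← Real.mul_rpow (by positivity) (by positivity)]
    congr 1
    field_simp
  rw [hmix]
  simp only [hnv, hexp2, hp2, hp1, hp3, hKC, real_inner_smul_left, inner_add_right,
    inner_smul_right, real_inner_self_eq_norm_sq, nsmul_eq_mul, Nat.cast_ofNat,
    equilMaxwellian1]
  have hBne : ((2 * Real.pi * nInf1 / m₁ : ℝ)) ^ ((d : ℝ) / 2) ≠ 0 := hApos
  field_simp [hd0, hn₂.ne', Real.pi_ne_zero]
  ring
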